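/- Let X be a nonempty set, E a real vector space, Y ⊆ E a nonempty convex set, and f : X × Y → ℝ such that f(x, ·) is concave on Y for each x ∈ X. Suppose there exist nonempty sets A, B ⊆ X and g : X × Y → ℝ with f(x,y) = h(x) + g(x,y) for some h : X → ℝ, where sup_A h < inf_B h, sup_{y∈Y} inf_{x∈A} g(x,y) ≤ 0, inf_{x∈B} sup_{y∈Y} g(x,y) ≥ 0, and sup_{y∈Y} g(x,y) = +∞ for all x ∉ B. Then sup_{y∈Y} inf_{x∈X} f(x,y) ≤ sup_A h + ε < inf_B h ≤ inf_{x∈X} sup_{y∈Y} f(x,y) for every ε ∈ (0, inf_B h − sup_A h); in particular the strict minimax inequality sup_Y inf_X f < inf_X sup_Y f holds. -/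
import Mathlib


open Set

/-- Inequalities (2.1) and (2.2) from the proof of Proposition 2.2, and the
resulting strict minimax inequality. -/
theorem stmt9 {X E : Type*} [Nonempty X] [AddCommGroup E] [Module ℝ E]
    (Y : Set E) (hY : Y.Nonempty) (hYconv : Convex ℝ Y)
    (f : X → E → ℝ) (h : X → ℝ) (g : X → E → ℝ)
    (hconc : ∀ x, ConcaveOn ℝ Y (f x))
    (hfg : ∀ x : X, ∀ y ∈ Y, f x y = h x + g x y)
    (A B : Set X) (hA : A.Nonempty) (hB : B.Nonempty)
    (hab : (⨆ x : A, (h x : EReal)) < ⨅ x : B, (h x : EReal))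
    (hb : (⨆ y : Y, ⨅ x : A, (g x y : EReal)) ≤ 0)
    (hc : (0 : EReal) ≤ ⨅ x : B, ⨆ y : Y, (g x y : EReal))
    (hd : ∀ x : X, x ∉ B → (⨆ y : Y, (g x y : EReal)) = ⊤) :
    (∀ ε : ℝ, 0 < ε →
        (ε : EReal) < (⨅ x : B, (h x : EReal)) - ⨆ x : A, (h x : EReal) →
        (⨆ y : Y, ⨅ x : X, (f x y : EReal)) ≤ (⨆ x : A, (h x : EReal)) + (ε : EReal) ∧
        (⨆ x : A, (h x : EReal)) + (ε : EReal) < (⨅ x : B, (h x : EReal)) ∧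
        (⨅ x : B, (h x : EReal)) ≤ ⨅ x : X, ⨆ y : Y, (f x y : EReal)) ∧
      (⨆ y : Y, ⨅ x : X, (f x y : EReal)) < ⨅ x : X, ⨆ y : Y, (f x y : EReal) := by
  obtain ⟨a, haA⟩ := hA
  obtain ⟨b, hbB⟩ := hB
  obtain ⟨y0, hy0⟩ := hY
  set SA : EReal := ⨆ x : A, (h x : EReal) with hSA_def
  set IB : EReal := ⨅ x : B, (h x : EReal) with hIB_def
  have hSA_ge : (h a : EReal) ≤ SA := le_iSup (fun x : A => (h x : EReal)) ⟨a, haA⟩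
  have hIB_le : IB ≤ (h b : EReal) := iInf_le (fun x : B => (h x : EReal)) ⟨b, hbB⟩
  have hSA_bot : SA ≠ ⊥ := fun hh => by simp [hh] at hSA_ge
  have hSA_top : SA ≠ ⊤ := by
    intro hh
    exact absurd (hab.trans_le hIB_le) (by simp [hh])
  have hsa : ((SA.toReal : ℝ) : EReal) = SA := EReal.coe_toReal hSA_top hSA_bot
  set sa : ℝ := SA.toReal with hsa_def
  -- (2.1)
  have L1 : (⨆ y : Y, ⨅ x : X, (f x y : EReal)) ≤ SA := by
    refine iSup_le fun y => ?_
    rw [← hsa]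
    refine le_of_forall_gt_imp_ge_of_dense fun c hc' => ?_
    induction c using EReal.rec with
    | bot => exact absurd hc' (by simp)
    | top => exact le_top
    | coe c =>
      have hδ : (0 : ℝ) < c - sa := by
        have := EReal.coe_lt_coe_iff.mp hc'
        linarith
      have ht : (⨅ x : A, (g x y.1 : EReal)) ≤ 0 :=
        le_trans (le_iSup (fun y : Y => ⨅ x : A, (g x y.1 : EReal)) y) hb
      have ht' : (⨅ x : A, (g x y.1 : EReal)) < ((c - sa : ℝ) : EReal) :=
        ht.trans_lt (by exact_mod_cast hδ)
      obtain ⟨x, hx⟩ := iInf_lt_iff.mp ht'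
      have hgx : g x.1 y.1 < c - sa := EReal.coe_lt_coe_iff.mp hx
      have hhx : h x.1 ≤ sa := by
        have : (h x.1 : EReal) ≤ (sa : EReal) := by
          rw [hsa]; exact le_iSup (fun x : A => (h x : EReal)) x
        exact EReal.coe_le_coe_iff.mp this
      have hfx : f x.1 y.1 ≤ c := by
        rw [hfg x.1 y.1 y.2]; linarith
      calc (⨅ x : X, (f x y.1 : EReal)) ≤ (f x.1 y.1 : EReal) :=
            iInf_le (fun x : X => (f x y.1 : EReal)) x.1
        _ ≤ (c : EReal) := EReal.coe_le_coe_iff.mpr hfx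
  -- (2.2)
  have L2 : IB ≤ ⨅ x : X, ⨆ y : Y, (f x y : EReal) := by
    refine le_iInf fun x => ?_
    by_cases hxB : x ∈ B
    · have h1 : IB ≤ (h x : EReal) := iInf_le (fun x : B => (h x : EReal)) ⟨x, hxB⟩
      refine h1.trans ?_
      refine le_of_forall_lt fun c hc' => ?_
      induction c using EReal.rec with
      | bot =>
        exact lt_of_lt_of_le (by simp : (⊥ : EReal) < (f x y0 : EReal))
          (le_iSup (fun y : Y => (f x y.1 : EReal)) ⟨y0, hy0⟩)
      | top => exact absurd hc' (by simp)
      | coe c =>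
        have h2 : (0 : EReal) ≤ ⨆ y : Y, (g x y.1 : EReal) :=
          hc.trans (iInf_le (fun x : B => ⨆ y : Y, (g x y.1 : EReal)) ⟨x, hxB⟩)
        have hcx : c < h x := EReal.coe_lt_coe_iff.mp hc'
        have h3 : ((c - h x : ℝ) : EReal) < ⨆ y : Y, (g x y.1 : EReal) :=
          lt_of_lt_of_le (by exact_mod_cast sub_neg.mpr hcx) h2
        obtain ⟨y, hy⟩ := lt_iSup_iff.mp h3
        have hgy : c - h x < g x y.1 := EReal.coe_lt_coe_iff.mp hy
        have hfy : c < f x y.1 := by rw [hfg x y.1 y.2]; linarith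
        exact lt_of_lt_of_le (EReal.coe_lt_coe_iff.mpr hfy)
          (le_iSup (fun y : Y => (f x y.1 : EReal)) y)
    · have hT : (⨆ y : Y, (f x y : EReal)) = ⊤ := by
        rw [iSup_eq_top]
        intro d hd'
        induction d using EReal.rec with
        | bot => exact ⟨⟨y0, hy0⟩, by simp⟩
        | top => exact absurd hd' (lt_irrefl _)
        | coe d =>
          have := hd x hxB
          rw [iSup_eq_top] at this
          obtain ⟨y, hy⟩ := this ((d - h x : ℝ) : EReal) (EReal.coe_lt_top _)
          have hgy : d - h x < g x y.1 := EReal.coe_lt_coe_iff.mp hy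
          exact ⟨y, EReal.coe_lt_coe_iff.mpr (by rw [hfg x y.1 y.2]; linarith)⟩
      simp [hT]
  constructor
  · intro ε hε hε'
    refine ⟨?_, ?_, L2⟩
    · refine L1.trans ?_
      rw [← hsa, ← EReal.coe_add]
      exact EReal.coe_le_coe_iff.mpr (by linarith)
    · have := EReal.add_lt_of_lt_sub hε'
      rwa [add_comm] at this
  · exact lt_of_le_of_lt L1 (lt_of_lt_of_le hab L2)
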